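/- Let p be an odd prime and n = (p−1)/2. Suppose f is a complex-valued function on the vertices of Π_p' that is constant on each wheel boundary, say f(v) = c_i for all v ∈ ∂W_i (1 ≤ i ≤ n), and suppose c_1 + c_2 + ⋯ + c_n = 0. Then the adjacency operator of Π_p' annihilates f: (A f)(v) = 0 for every vertex v of Π_p'. In particular, the kernel of the adjacency operator of Π_p' has dimension at least (p−3)/2. -/

import Mathlib

/-- Pairs `(λ, μ) ∈ (ℤ/N)²` with `gcd(λ, μ, N) = 1`. -/
abbrev PlatonicPair (N : ℕ) : Type :=
  {x : ZMod N × ZMod N // Nat.gcd (Nat.gcd x.1.val x.2.val) N = 1}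

/-- Identify `(λ,μ)` with `(-λ,-μ)`. -/
instance platonicSetoid (N : ℕ) : Setoid (PlatonicPair N) where
  r x y := y.val = x.val ∨ y.val = -x.val
  iseqv := by
    refine ⟨fun _ => Or.inl rfl, ?_, ?_⟩
    · rintro x y (h | h)
      · exact Or.inl h.symm
      · right; rw [h, neg_neg]
    · rintro x y z (h1 | h1) (h2 | h2)
      · exact Or.inl (h2.trans h1)
      · right; rw [h2, h1]
      · right; rw [h2, h1]
      · left; rw [h2, h1, neg_neg]

/-- Vertices of the Platonic graph: classes `[λ,μ] = {(λ,μ), (-λ,-μ)}`. -/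
abbrev PlatonicVertex (N : ℕ) : Type := Quotient (platonicSetoid N)

/-- The Platonic graph `Π_N`: distinct classes `[λ,μ]`, `[ν,ω]` are adjacent
iff `λω - μν = ±1` in `ℤ/N`. -/
def Platonic (N : ℕ) : SimpleGraph (PlatonicVertex N) where
  Adj a b := a ≠ b ∧ ∃ x y : PlatonicPair N, ⟦x⟧ = a ∧ ⟦y⟧ = b ∧
    (x.val.1 * y.val.2 - x.val.2 * y.val.1 = 1 ∨
     x.val.1 * y.val.2 - x.val.2 * y.val.1 = -1)
  symm := by
    constructor
    rintro a b ⟨hne, x, y, hx, hy, hdet⟩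
    refine ⟨hne.symm, y, x, hy, hx, ?_⟩
    rcases hdet with h | h
    · right; linear_combination -h
    · left; linear_combination -h
  loopless := ⟨fun a h => h.1 rfl⟩

instance platonicDecRel (N : ℕ) :
    DecidableRel (α := PlatonicPair N) (· ≈ ·) := fun x y =>
  inferInstanceAs (Decidable (y.val = x.val ∨ y.val = -x.val))

instance (N : ℕ) : DecidableEq (PlatonicVertex N) :=
  @Quotient.decidableEq _ _ (platonicDecRel N)

instance (N : ℕ) [NeZero N] : Fintype (PlatonicVertex N) :=
  Quotient.fintype _

instance platonicAdjDec (N : ℕ) [NeZero N] : DecidableRel (Platonic N).Adj := fun a b =>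
  inferInstanceAs (Decidable (a ≠ b ∧ ∃ x y : PlatonicPair N, ⟦x⟧ = a ∧ ⟦y⟧ = b ∧
    (x.val.1 * y.val.2 - x.val.2 * y.val.1 = 1 ∨
     x.val.1 * y.val.2 - x.val.2 * y.val.1 = -1)))

/-- The class of `(λ,μ)` has nonvanishing second coordinate. -/
def secondNZ (N : ℕ) (v : PlatonicVertex N) : Prop :=
  ∀ x : PlatonicPair N, ⟦x⟧ = v → x.val.2 ≠ 0

instance (N : ℕ) [NeZero N] : DecidablePred (secondNZ N) := fun _ =>
  Fintype.decidableForallFintype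

/-- The modified Platonic graph `Π_p'`: induced subgraph of `Π_p` on the classes
`[λ,μ]` with `μ ≠ 0`. -/
def ModPlatonic (N : ℕ) : SimpleGraph {v : PlatonicVertex N | secondNZ N v} :=
  SimpleGraph.induce {v : PlatonicVertex N | secondNZ N v} (Platonic N)

instance (N : ℕ) [NeZero N] : DecidableRel (ModPlatonic N).Adj := fun a b =>
  inferInstanceAs (Decidable ((Platonic N).Adj a b))

section Aux
set_option linter.unusedSectionVars false
variable (p : ℕ) [NeZero p]

lemma pp_gcd (hp : p.Prime) (x y : ZMod p) (h : x ≠ 0 ∨ y ≠ 0) :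
    Nat.gcd (Nat.gcd x.val y.val) p = 1 := by
  have hnd : ¬ p ∣ Nat.gcd x.val y.val := by
    intro hd
    have hx : x = 0 := by
      rw [← ZMod.val_eq_zero]
      exact Nat.eq_zero_of_dvd_of_lt (hd.trans (Nat.gcd_dvd_left _ _)) (ZMod.val_lt x)
    have hy : y = 0 := by
      rw [← ZMod.val_eq_zero]
      exact Nat.eq_zero_of_dvd_of_lt (hd.trans (Nat.gcd_dvd_right _ _)) (ZMod.val_lt y)
    rcases h with h | h
    · exact h hx
    · exact h hy
  exact Nat.coprime_comm.mp (hp.coprime_iff_not_dvd.mpr hnd)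

def mkP (hp : p.Prime) (x y : ZMod p) (h : x ≠ 0 ∨ y ≠ 0) : PlatonicPair p :=
  ⟨(x, y), pp_gcd p hp x y h⟩

@[simp] lemma mkP_val (hp) (x y) (h) : (mkP p hp x y h).val = (x, y) := rfl

lemma mk_eq_mk {x y : PlatonicPair p} :
    (⟦x⟧ : PlatonicVertex p) = ⟦y⟧ ↔ (y.val = x.val ∨ y.val = -x.val) := by
  rw [Quotient.eq]
  exact Iff.rfl

lemma secondNZ_mk {x : PlatonicPair p} :
    secondNZ p ⟦x⟧ ↔ x.val.2 ≠ 0 := by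
  constructor
  · exact fun h => h x rfl
  · intro h y hy
    rcases (mk_eq_mk p).mp hy with h1 | h1
    · exact fun h0 => h ((congrArg Prod.snd h1).trans h0)
    · exact fun h0 => h (by simpa [h0] using congrArg Prod.snd h1)

lemma two_nz (hp : p.Prime) (hodd : Odd p) : (2 : ZMod p) ≠ 0 := by
  intro h
  have : ((2 : ℕ) : ZMod p) = 0 := by exact_mod_cast h
  rw [ZMod.natCast_eq_zero_iff] at this
  have := (Nat.prime_dvd_prime_iff_eq hp Nat.prime_two).mp this
  rcases hodd with ⟨k, hk⟩
  omega
end Aux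

section Aux2
set_option linter.unusedSectionVars false
variable (p : ℕ) [NeZero p]

def axisV (hp : p.Prime) (s : ZMod p) : PlatonicVertex p :=
  ⟦mkP p hp (if s = 0 then 1 else s) 0 (Or.inl (by
    haveI : Fact p.Prime := ⟨hp⟩
    rcases eq_or_ne s 0 with h | h <;> simp [h]))⟧

lemma axisV_of_ne (hp : p.Prime) {s : ZMod p} (hs : s ≠ 0) :
    axisV p hp s = ⟦mkP p hp s 0 (Or.inl hs)⟧ := by
  apply Quotient.sound
  left
  simp [mkP, hs]

lemma axisV_neg (hp : p.Prime) (s : ZMod p) : axisV p hp (-s) = axisV p hp s := by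
  rcases eq_or_ne s 0 with h | h
  · rw [h, neg_zero]
  · rw [axisV_of_ne p hp h, axisV_of_ne p hp (neg_ne_zero.mpr h)]
    apply Quotient.sound
    right
    simp [mkP, Prod.ext_iff]

def wheelOf (hp : p.Prime) : PlatonicVertex p → PlatonicVertex p :=
  Quotient.lift (fun x : PlatonicPair p => axisV p hp x.val.2⁻¹) (by
    intro a b hab
    haveI : Fact p.Prime := ⟨hp⟩
    show axisV p hp a.val.2⁻¹ = axisV p hp b.val.2⁻¹
    rcases hab with h | h
    · rw [show b.val.2 = a.val.2 from congrArg Prod.snd h]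
    · have h2 : b.val.2 = -a.val.2 := by simpa using congrArg Prod.snd h
      rw [h2, inv_neg, axisV_neg])

@[simp] lemma wheelOf_mk (hp : p.Prime) (x : PlatonicPair p) :
    wheelOf p hp ⟦x⟧ = axisV p hp x.val.2⁻¹ := rfl

lemma adj_mk (hp : p.Prime) (x y : PlatonicPair p)
    (h : x.val.1 * y.val.2 - x.val.2 * y.val.1 = 1 ∨
         x.val.1 * y.val.2 - x.val.2 * y.val.1 = -1) :
    (Platonic p).Adj ⟦x⟧ ⟦y⟧ := by
  haveI : Fact p.Prime := ⟨hp⟩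
  refine ⟨?_, x, y, rfl, rfl, h⟩
  intro he
  have hdet0 : x.val.1 * y.val.2 - x.val.2 * y.val.1 = 0 := by
    rcases (mk_eq_mk p).mp he with h1 | h1
    · rw [h1]; ring
    · rw [h1]; simp; ring
  rw [hdet0] at h
  rcases h with h | h
  · exact one_ne_zero h.symm
  · exact neg_ne_zero.mpr one_ne_zero h.symm

def nbrP (hp : p.Prime) (x : PlatonicPair p) (hx : x.val.2 ≠ 0) (t : ZMod p) : PlatonicPair p :=
  mkP p hp (-x.val.2⁻¹ + t * x.val.1) (t * x.val.2) (by
    haveI : Fact p.Prime := ⟨hp⟩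
    rcases eq_or_ne t 0 with h | h
    · left; simp [h, hx]
    · right; exact mul_ne_zero h hx)

@[simp] lemma nbrP_val (hp : p.Prime) (x : PlatonicPair p) (hx : x.val.2 ≠ 0) (t : ZMod p) :
    (nbrP p hp x hx t).val = (-x.val.2⁻¹ + t * x.val.1, t * x.val.2) := rfl

lemma adj_classify (hp : p.Prime) (x : PlatonicPair p) (hx : x.val.2 ≠ 0)
    (b : PlatonicVertex p) :
    (Platonic p).Adj ⟦x⟧ b ↔ ∃ t : ZMod p, b = ⟦nbrP p hp x hx t⟧ := by
  haveI : Fact p.Prime := ⟨hp⟩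
  constructor
  · rintro ⟨hne, u, w, hu, hw, hdet⟩
    have H : x.val.1 * w.val.2 - x.val.2 * w.val.1 = 1 ∨
        x.val.1 * w.val.2 - x.val.2 * w.val.1 = -1 := by
      rcases (mk_eq_mk p).mp hu with h | h
      · rw [← h] at hdet; exact hdet
      · have h1 : x.val.1 = -u.val.1 := by simpa using congrArg Prod.fst h
        have h2 : x.val.2 = -u.val.2 := by simpa using congrArg Prod.snd h
        rcases hdet with h3 | h3
        · right; rw [h1, h2]; linear_combination -h3
        · left; rw [h1, h2]; linear_combination -h3
    rcases H with H | H
    · refine ⟨w.val.2 * x.val.2⁻¹, ?_⟩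
      rw [← hw, mk_eq_mk]
      left
      rw [nbrP_val, Prod.ext_iff]
      constructor
      · show -x.val.2⁻¹ + w.val.2 * x.val.2⁻¹ * x.val.1 = w.val.1
        field_simp
        linear_combination H
      · show w.val.2 * x.val.2⁻¹ * x.val.2 = w.val.2
        rw [inv_mul_cancel_right₀ hx]
    · refine ⟨-(w.val.2 * x.val.2⁻¹), ?_⟩
      rw [← hw, mk_eq_mk]
      right
      rw [nbrP_val, Prod.ext_iff]
      constructor
      · show -x.val.2⁻¹ + -(w.val.2 * x.val.2⁻¹) * x.val.1 = -w.val.1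
        field_simp
        linear_combination -H
      · show -(w.val.2 * x.val.2⁻¹) * x.val.2 = -w.val.2
        field_simp
  · rintro ⟨t, rfl⟩
    refine adj_mk p hp _ _ (Or.inl ?_)
    show x.val.1 * (t * x.val.2) - x.val.2 * (-x.val.2⁻¹ + t * x.val.1) = 1
    field_simp
    ring

lemma nbrP_inj (hp : p.Prime) (hodd : Odd p) (x : PlatonicPair p) (hx : x.val.2 ≠ 0) {t s : ZMod p}
    (h : (⟦nbrP p hp x hx t⟧ : PlatonicVertex p) = ⟦nbrP p hp x hx s⟧) : t = s := by
  haveI : Fact p.Prime := ⟨hp⟩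
  rcases (mk_eq_mk p).mp h with h1 | h1
  · have h2 : s * x.val.2 = t * x.val.2 := congrArg Prod.snd h1
    exact (mul_right_cancel₀ hx h2).symm
  · have h2 : s * x.val.2 = -(t * x.val.2) := by simpa using congrArg Prod.snd h1
    have h3 : -x.val.2⁻¹ + s * x.val.1 = -(-x.val.2⁻¹ + t * x.val.1) := by
      simpa using congrArg Prod.fst h1
    have hs : s = -t := by
      have : s * x.val.2 = (-t) * x.val.2 := by rw [h2]; ring
      exact mul_right_cancel₀ hx this
    exfalso
    have h4 : (2 : ZMod p) * x.val.2⁻¹ = 0 := by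
      linear_combination -h3 + x.val.1 * hs
    rcases mul_eq_zero.mp h4 with h5 | h5
    · exact two_nz p hp hodd h5
    · exact inv_ne_zero hx h5
end Aux2

section Aux3
set_option linter.unusedSectionVars false
variable (p : ℕ) [NeZero p]

lemma axis_first_nz (hp : p.Prime) (x : PlatonicPair p) (h2 : x.val.2 = 0) :
    x.val.1 ≠ 0 := by
  intro h1
  have hx := x.prop
  rw [(ZMod.val_eq_zero _).mpr h1, (ZMod.val_eq_zero _).mpr h2] at hx
  simp at hx
  exact hp.one_lt.ne' hx

lemma axisV_mem (hp : p.Prime) {s : ZMod p} (hs : s ≠ 0) :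
    ∃ x : PlatonicPair p, ⟦x⟧ = axisV p hp s ∧ x.val.2 = 0 :=
  ⟨mkP p hp s 0 (Or.inl hs), (axisV_of_ne p hp hs).symm, rfl⟩

lemma axisV_eq_iff (hp : p.Prime) {s : ZMod p} (hs : s ≠ 0) (y : PlatonicPair p)
    (hy2 : y.val.2 = 0) :
    axisV p hp s = ⟦y⟧ ↔ s = y.val.1 ∨ s = -y.val.1 := by
  rw [axisV_of_ne p hp hs, mk_eq_mk]
  constructor
  · rintro (h | h)
    · left; exact (congrArg Prod.fst h).symm
    · right
      have h1 : y.val.1 = -s := by simpa using congrArg Prod.fst h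
      rw [h1, neg_neg]
  · rintro (h | h)
    · left
      rw [mkP_val]
      exact Prod.ext_iff.mpr ⟨h.symm, hy2⟩
    · right
      rw [mkP_val]
      refine Prod.ext_iff.mpr ⟨?_, by simp [hy2]⟩
      show y.val.1 = -(s, (0:ZMod p)).1
      rw [h, neg_neg]

lemma wheel_unique (hp : p.Prime) (v : PlatonicVertex p) (hv : secondNZ p v)
    (a : PlatonicVertex p) (x : PlatonicPair p) (hxa : ⟦x⟧ = a) (hx2 : x.val.2 = 0)
    (hadj : (Platonic p).Adj v a) : wheelOf p hp v = a := by
  haveI : Fact p.Prime := ⟨hp⟩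
  obtain ⟨hne, u, w, hu, hw, hdet⟩ := hadj
  have hu2 : u.val.2 ≠ 0 := hv u hu
  have hw2 : w.val.2 = 0 := by
    rcases (mk_eq_mk p).mp (hw.trans hxa.symm) with h | h
    · exact (congrArg Prod.snd h).symm.trans hx2
    · have h1 : x.val.2 = -w.val.2 := by simpa using congrArg Prod.snd h
      rw [hx2] at h1
      exact neg_eq_zero.mp h1.symm
  rw [← hu, wheelOf_mk, ← hw, axisV_of_ne p hp (inv_ne_zero hu2), mk_eq_mk]
  rcases hdet with h | h
  · right
    rw [mkP_val]
    refine Prod.ext_iff.mpr ⟨?_, by simp [hw2]⟩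
    show w.val.1 = -(u.val.2⁻¹, (0:ZMod p)).1
    show w.val.1 = -u.val.2⁻¹
    rw [hw2] at h
    field_simp
    linear_combination -h
  · left
    rw [mkP_val]
    refine Prod.ext_iff.mpr ⟨?_, hw2⟩
    show w.val.1 = u.val.2⁻¹
    rw [hw2] at h
    field_simp
    linear_combination -h

end Aux3

lemma mod_adj (p : ℕ) [NeZero p] (a b : {v : PlatonicVertex p | secondNZ p v}) :
    (ModPlatonic p).Adj a b ↔ (Platonic p).Adj a.val b.val := Iff.rfl

lemma part1 (p : ℕ) [NeZero p] (hp : p.Prime) (hodd : Odd p)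
    (f : {v : PlatonicVertex p | secondNZ p v} → ℂ) (c : PlatonicVertex p → ℂ)
    (hf : ∀ a : PlatonicVertex p, (∃ x : PlatonicPair p, ⟦x⟧ = a ∧ x.val.2 = 0) →
        ∀ v : {v : PlatonicVertex p | secondNZ p v}, (Platonic p).Adj v.val a → f v = c a)
    (hsum : (∑ a ∈ Finset.univ.filter
          (fun a : PlatonicVertex p => ∃ x : PlatonicPair p, ⟦x⟧ = a ∧ x.val.2 = 0),
        c a) = 0) :
    ((ModPlatonic p).adjMatrix ℂ).mulVec f = 0 := by
  haveI : Fact p.Prime := ⟨hp⟩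
  funext v
  rw [Pi.zero_apply, SimpleGraph.adjMatrix_mulVec_apply]
  obtain ⟨x, hx⟩ := Quotient.exists_rep v.val
  have hm : x.val.2 ≠ 0 := v.prop x hx
  have key : ∀ t : ZMod p, t ≠ 0 → secondNZ p ⟦nbrP p hp x hm t⟧ := fun t ht =>
    (secondNZ_mk p).mpr (mul_ne_zero ht hm)
  have step1 : ∑ t ∈ Finset.univ.filter (fun t : ZMod p => t ≠ 0),
        c (axisV p hp (t * x.val.2)⁻¹)
      = ∑ u ∈ (ModPlatonic p).neighborFinset v, f u := by
    refine Finset.sum_bij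
      (fun t ht => ⟨⟦nbrP p hp x hm t⟧, key t (Finset.mem_filter.mp ht).2⟩) ?_ ?_ ?_ ?_
    · intro t ht
      rw [SimpleGraph.mem_neighborFinset, mod_adj, ← hx]
      exact (adj_classify p hp x hm _).mpr ⟨t, rfl⟩
    · intro t1 h1 t2 h2 he
      exact nbrP_inj p hp hodd x hm (Subtype.ext_iff.mp he)
    · intro u hu
      rw [SimpleGraph.mem_neighborFinset, mod_adj, ← hx] at hu
      obtain ⟨t, htu⟩ := (adj_classify p hp x hm u.val).mp hu
      have ht0 : t ≠ 0 := by
        intro h0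
        exact u.prop (nbrP p hp x hm t) htu.symm
          (by show t * x.val.2 = 0; rw [h0, zero_mul])
      exact ⟨t, Finset.mem_filter.mpr ⟨Finset.mem_univ _, ht0⟩, Subtype.ext htu.symm⟩
    · intro t ht
      have ht0 := (Finset.mem_filter.mp ht).2
      have htm : t * x.val.2 ≠ 0 := mul_ne_zero ht0 hm
      refine (hf (axisV p hp (t * x.val.2)⁻¹) (axisV_mem p hp (inv_ne_zero htm)) _ ?_).symm
      show (Platonic p).Adj ⟦nbrP p hp x hm t⟧ (axisV p hp (t * x.val.2)⁻¹)
      rw [axisV_of_ne p hp (inv_ne_zero htm)]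
      refine adj_mk p hp _ _ (Or.inr ?_)
      show (nbrP p hp x hm t).val.1 * 0 - (t * x.val.2) * (t * x.val.2)⁻¹ = -1
      rw [mul_zero, mul_inv_cancel₀ htm]; ring
  have step2 : ∑ t ∈ Finset.univ.filter (fun t : ZMod p => t ≠ 0),
        c (axisV p hp (t * x.val.2)⁻¹)
      = ∑ s ∈ Finset.univ.filter (fun s : ZMod p => s ≠ 0), c (axisV p hp s) := by
    refine Finset.sum_nbij' (i := fun t => (t * x.val.2)⁻¹) (j := fun s => (s * x.val.2)⁻¹)
      ?_ ?_ ?_ ?_ ?_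
    · intro t ht
      exact Finset.mem_filter.mpr ⟨Finset.mem_univ _,
        inv_ne_zero (mul_ne_zero (Finset.mem_filter.mp ht).2 hm)⟩
    · intro s hs
      exact Finset.mem_filter.mpr ⟨Finset.mem_univ _,
        inv_ne_zero (mul_ne_zero (Finset.mem_filter.mp hs).2 hm)⟩
    · intro t ht
      have ht0 := (Finset.mem_filter.mp ht).2
      field_simp
    · intro s hs
      have hs0 := (Finset.mem_filter.mp hs).2
      field_simp
    · intro t ht
      rfl
  have step3 : ∑ s ∈ Finset.univ.filter (fun s : ZMod p => s ≠ 0), c (axisV p hp s)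
      = ∑ a ∈ Finset.univ.filter
          (fun a : PlatonicVertex p => ∃ x : PlatonicPair p, ⟦x⟧ = a ∧ x.val.2 = 0),
        (2 : ℕ) • c a := by
    have hmaps : ∀ s ∈ Finset.univ.filter (fun s : ZMod p => s ≠ 0),
        axisV p hp s ∈ Finset.univ.filter
          (fun a : PlatonicVertex p => ∃ x : PlatonicPair p, ⟦x⟧ = a ∧ x.val.2 = 0) := by
      intro s hs
      refine Finset.mem_filter.mpr ⟨Finset.mem_univ _, ?_⟩
      exact axisV_mem p hp (Finset.mem_filter.mp hs).2
    rw [← Finset.sum_fiberwise_of_maps_to hmaps (fun s => c (axisV p hp s))]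
    refine Finset.sum_congr rfl ?_
    intro a ha
    obtain ⟨y, hy, hy2⟩ := (Finset.mem_filter.mp ha).2
    have hy1 : y.val.1 ≠ 0 := axis_first_nz p hp y hy2
    have hne : y.val.1 ≠ -y.val.1 := by
      intro h
      have h2 : (2 : ZMod p) * y.val.1 = 0 := by linear_combination h
      rcases mul_eq_zero.mp h2 with h3 | h3
      · exact two_nz p hp hodd h3
      · exact hy1 h3
    have hfib : Finset.filter (fun s => axisV p hp s = a)
          (Finset.univ.filter (fun s : ZMod p => s ≠ 0)) = {y.val.1, -y.val.1} := by
      ext s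
      simp only [Finset.mem_filter, Finset.mem_univ, true_and, Finset.mem_insert,
        Finset.mem_singleton]
      constructor
      · rintro ⟨hs0, heq⟩
        rw [← hy] at heq
        exact (axisV_eq_iff p hp hs0 y hy2).mp heq
      · rintro (h | h)
        · subst h
          exact ⟨hy1, by rw [← hy]; exact (axisV_eq_iff p hp hy1 y hy2).mpr (Or.inl rfl)⟩
        · subst h
          refine ⟨neg_ne_zero.mpr hy1, ?_⟩
          rw [← hy]
          exact (axisV_eq_iff p hp (neg_ne_zero.mpr hy1) y hy2).mpr (Or.inr rfl)
      done
    rw [hfib, Finset.sum_pair hne]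
    have e1 : axisV p hp y.val.1 = a := by
      rw [← hy]; exact (axisV_eq_iff p hp hy1 y hy2).mpr (Or.inl rfl)
    rw [axisV_neg, e1, two_smul]
  rw [← step1, step2, step3, ← Finset.smul_sum, hsum, smul_zero]

section Aux4
set_option linter.unusedSectionVars false
variable (p : ℕ) [NeZero p]

lemma natCast_nz (i : ℕ) (h1 : 0 < i) (h2 : i < p) : (i : ZMod p) ≠ 0 := by
  rw [Ne, ZMod.natCast_eq_zero_iff]
  intro hd
  have := Nat.le_of_dvd h1 hd
  omega

lemma axis_nat_inj (hp : p.Prime) {i j : ℕ} (hi0 : 0 < i) (hj0 : 0 < j)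
    (hilt : i < p) (hjlt : j < p) (hij : i + j < p) :
    axisV p hp (i : ZMod p) = axisV p hp (j : ZMod p) ↔ i = j := by
  constructor
  · intro h
    rw [axisV_of_ne p hp (natCast_nz p j hj0 hjlt)] at h
    rcases (axisV_eq_iff p hp (natCast_nz p i hi0 hilt)
        (mkP p hp (j : ZMod p) 0 (Or.inl (natCast_nz p j hj0 hjlt))) rfl).mp h with h1 | h1
    · have hcast : ((i : ℕ) : ZMod p) = ((j : ℕ) : ZMod p) := h1
      have : ((i : ℕ) : ZMod p).val = ((j : ℕ) : ZMod p).val := by rw [hcast]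
      rwa [ZMod.val_cast_of_lt hilt, ZMod.val_cast_of_lt hjlt] at this
    · exfalso
      have hcast : ((i : ℕ) : ZMod p) = -((j : ℕ) : ZMod p) := h1
      have h2 : ((i + j : ℕ) : ZMod p) = 0 := by
        push_cast
        rw [hcast]
        ring
      rw [ZMod.natCast_eq_zero_iff] at h2
      have := Nat.le_of_dvd (by omega) h2
      omega
  · rintro rfl; rfl

def cfun (hp : p.Prime) (i : ℕ) : PlatonicVertex p → ℂ := fun a =>
  (if a = axisV p hp (i : ZMod p) then 1 else 0) -
  (if a = axisV p hp ((1 : ℕ) : ZMod p) then 1 else 0)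

def ffun (hp : p.Prime) (i : ℕ) : {v : PlatonicVertex p | secondNZ p v} → ℂ :=
  fun v => cfun p hp i (wheelOf p hp v.val)

lemma ffun_mem_ker (hp : p.Prime) (hodd : Odd p) (i : ℕ) (hi0 : 0 < i) (hilt : i < p) :
    ffun p hp i ∈ LinearMap.ker (((ModPlatonic p).adjMatrix ℂ).mulVecLin) := by
  have hp3 : 3 ≤ p := by
    obtain ⟨k, hk⟩ := hodd
    have := hp.two_le
    omega
  rw [LinearMap.mem_ker, Matrix.mulVecLin_apply]
  apply part1 p hp hodd _ (cfun p hp i)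
  · intro a ha v hadj
    obtain ⟨x, hxa, hx2⟩ := ha
    have hw := wheel_unique p hp v.val v.prop a x hxa hx2 hadj
    show cfun p hp i (wheelOf p hp v.val) = cfun p hp i a
    rw [hw]
  · show (∑ a ∈ Finset.univ.filter
        (fun a : PlatonicVertex p => ∃ x : PlatonicPair p, ⟦x⟧ = a ∧ x.val.2 = 0),
      ((if a = axisV p hp (i : ZMod p) then (1:ℂ) else 0) -
       (if a = axisV p hp ((1 : ℕ) : ZMod p) then 1 else 0))) = 0
    rw [Finset.sum_sub_distrib, Finset.sum_ite_eq', Finset.sum_ite_eq',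
      if_pos, if_pos, sub_self]
    · exact Finset.mem_filter.mpr ⟨Finset.mem_univ _,
        axisV_mem p hp (natCast_nz p 1 one_pos (by omega))⟩
    · exact Finset.mem_filter.mpr ⟨Finset.mem_univ _,
        axisV_mem p hp (natCast_nz p i hi0 hilt)⟩

lemma part2 (hp : p.Prime) (hodd : Odd p) :
    (p - 3) / 2 ≤
      Module.finrank ℂ (LinearMap.ker (((ModPlatonic p).adjMatrix ℂ).mulVecLin)) := by
  haveI : Fact p.Prime := ⟨hp⟩
  have hp3 : 3 ≤ p := by
    obtain ⟨k, hk⟩ := hodd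
    have := hp.two_le
    omega
  set I : Finset ℕ := Finset.Icc 2 ((p - 1) / 2) with hI
  set K := LinearMap.ker (((ModPlatonic p).adjMatrix ℂ).mulVecLin) with hK
  have hmem : ∀ i : ↥I, ffun p hp (i : ℕ) ∈ K := by
    intro i
    have hi := Finset.mem_Icc.mp i.prop
    exact ffun_mem_ker p hp hodd _ (by omega) (by omega)
  have hli : LinearIndependent ℂ (fun i : ↥I => (⟨ffun p hp (i : ℕ), hmem i⟩ : K)) := by
    rw [Fintype.linearIndependent_iff]
    intro coef hcoef j
    have hj := Finset.mem_Icc.mp j.prop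
    have hjz : (((j : ℕ) : ℕ) : ZMod p) ≠ 0 := natCast_nz p _ (by omega) (by omega)
    set vj : {v : PlatonicVertex p | secondNZ p v} :=
      ⟨⟦mkP p hp 0 (((j : ℕ) : ZMod p))⁻¹ (Or.inr (inv_ne_zero hjz))⟧,
        (secondNZ_mk p).mpr (inv_ne_zero hjz)⟩ with hvj
    have hwj : wheelOf p hp vj.val = axisV p hp ((j : ℕ) : ZMod p) := by
      show wheelOf p hp ⟦_⟧ = _
      rw [wheelOf_mk]
      show axisV p hp ((((j : ℕ) : ZMod p))⁻¹)⁻¹ = _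
      rw [inv_inv]
    have h0 : (∑ i : ↥I, coef i • ffun p hp (i : ℕ)) vj = 0 := by
      have h1 := congrArg Subtype.val hcoef
      rw [AddSubmonoidClass.coe_finset_sum] at h1
      simp only [SetLike.val_smul] at h1
      rw [h1]
      rfl
    rw [Finset.sum_apply] at h0
    have heval : ∀ i : ↥I, (coef i • ffun p hp (i : ℕ)) vj
        = if i = j then coef i else 0 := by
      intro i
      have hi := Finset.mem_Icc.mp i.prop
      have hne1 : axisV p hp ((j : ℕ) : ZMod p) ≠ axisV p hp ((1 : ℕ) : ZMod p) := by
        rw [Ne, axis_nat_inj p hp (by omega) one_pos (by omega) (by omega) (by omega)]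
        omega
      show coef i • cfun p hp (i : ℕ) (wheelOf p hp vj.val) = _
      rw [hwj]
      show coef i • ((if axisV p hp ((j : ℕ) : ZMod p) = axisV p hp ((i : ℕ) : ZMod p)
          then (1:ℂ) else 0) -
        (if axisV p hp ((j : ℕ) : ZMod p) = axisV p hp ((1 : ℕ) : ZMod p) then 1 else 0)) = _
      rw [if_neg hne1, sub_zero]
      have hiff : (axisV p hp ((j : ℕ) : ZMod p) = axisV p hp ((i : ℕ) : ZMod p))
          ↔ ((j : ℕ) = (i : ℕ)) :=
        axis_nat_inj p hp (by omega) (by omega) (by omega) (by omega) (by omega)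
      simp only [hiff]
      rcases eq_or_ne (i : ↥I) j with h | h
      · subst h
        simp
      · rw [if_neg (fun hc => h (Subtype.ext hc.symm)), if_neg h, smul_zero]
    have h3 : ∑ i : ↥I, (coef i • ffun p hp (i : ℕ)) vj
        = ∑ i : ↥I, (if i = j then coef i else 0) :=
      Finset.sum_congr rfl (fun i _ => heval i)
    rw [h3, Finset.sum_ite_eq' Finset.univ j coef, if_pos (Finset.mem_univ _)] at h0
    exact h0
  have hcard := hli.fintype_card_le_finrank
  rw [Fintype.card_coe, hI, Nat.card_Icc] at hcard
  obtain ⟨k, hk⟩ := hodd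
  omega
end Aux4


/-- If a function on the vertices of `Π_p'` is constant on each wheel boundary
`∂W_i` with values summing to zero over the wheels, then the adjacency operator of
`Π_p'` annihilates it.  In particular, the kernel of the adjacency operator of
`Π_p'` has dimension at least `(p-3)/2`. -/
theorem modPlatonic_kernel (p : ℕ) (hp : p.Prime) (hodd : Odd p) [NeZero p] :
    (∀ (f : {v : PlatonicVertex p | secondNZ p v} → ℂ) (c : PlatonicVertex p → ℂ),
      (∀ a : PlatonicVertex p, (∃ x : PlatonicPair p, ⟦x⟧ = a ∧ x.val.2 = 0) →
        ∀ v : {v : PlatonicVertex p | secondNZ p v},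
          (Platonic p).Adj v.val a → f v = c a) →
      (∑ a ∈ Finset.univ.filter
          (fun a : PlatonicVertex p => ∃ x : PlatonicPair p, ⟦x⟧ = a ∧ x.val.2 = 0),
        c a) = 0 →
      ((ModPlatonic p).adjMatrix ℂ).mulVec f = 0) ∧
    (p - 3) / 2 ≤
      Module.finrank ℂ (LinearMap.ker (((ModPlatonic p).adjMatrix ℂ).mulVecLin)) := by
  exact ⟨fun f c hf hsum => part1 p hp hodd f c hf hsum, part2 p hp hodd⟩
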